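/- Let R be a commutative ring, a, b ∈ R, and n ≥ 1. Then Σ_{r=0}^{⌊n/2⌋} (C(n,r) − C(n,r−1)) · (a·b)^r · (Σ_{j=0}^{n−2r} a^j·b^{n−2r−j}) = (a + b)^n, where C(n,−1) = 0. -/
import Mathlib


open BigOperators

/-- Multiplicity `C(n,r) - C(n,r-1)` (with `C(n,-1) = 0`). -/
def mult (n r : ℕ) : ℕ := n.choose r - if r = 0 then 0 else n.choose (r - 1)

lemma sum_mult (n m : ℕ) (h : m ≤ n / 2) :
    ∑ r ∈ Finset.range (m + 1), mult n r = n.choose m := by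
  induction m with
  | zero => simp [mult]
  | succ m ih =>
    rw [Finset.sum_range_succ, ih (by omega)]
    have hle : n.choose m ≤ n.choose (m + 1) :=
      Nat.choose_le_succ_of_lt_half_left (by omega)
    simp only [mult, Nat.succ_ne_zero, if_false, Nat.add_sub_cancel]
    omega

/-- The trace of the `n`-fold tensor power of a `2×2` matrix with eigenvalues `a, b`
equals the sum over two-row partitions `(n-r, r)` of `dim S_λ · s_λ(a,b)`. -/
theorem stmt2 {R : Type*} [CommRing R] (a b : R) (n : ℕ) (hn : 1 ≤ n) :
    ∑ r ∈ Finset.range (n / 2 + 1),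
      (mult n r : R) * (a * b) ^ r *
        ∑ j ∈ Finset.range (n - 2 * r + 1), a ^ j * b ^ (n - 2 * r - j) =
    (a + b) ^ n := by
  calc ∑ r ∈ Finset.range (n / 2 + 1), (mult n r : R) * (a * b) ^ r *
        ∑ j ∈ Finset.range (n - 2 * r + 1), a ^ j * b ^ (n - 2 * r - j)
      = ∑ r ∈ Finset.range (n / 2 + 1), ∑ j ∈ Finset.range (n - 2 * r + 1),
          (mult n r : R) * (a ^ (r + j) * b ^ (n - (r + j))) := by
        refine Finset.sum_congr rfl fun r hr => ?_
        rw [Finset.mul_sum]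
        refine Finset.sum_congr rfl fun j hj => ?_
        simp only [Finset.mem_range] at hr hj
        have h1 : r + (n - 2 * r - j) = n - (r + j) := by omega
        rw [mul_assoc, mul_pow]
        congr 1
        calc a ^ r * b ^ r * (a ^ j * b ^ (n - 2 * r - j))
            = a ^ (r + j) * b ^ (r + (n - 2 * r - j)) := by
              rw [pow_add, pow_add]; ring
          _ = a ^ (r + j) * b ^ (n - (r + j)) := by rw [h1]
    _ = ∑ k ∈ Finset.range (n + 1), ∑ r ∈ Finset.range (min k (n - k) + 1),
          (mult n r : R) * (a ^ k * b ^ (n - k)) := by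
        rw [Finset.sum_sigma', Finset.sum_sigma']
        refine Finset.sum_nbij' (fun p => ⟨p.1 + p.2, p.1⟩) (fun p => ⟨p.2, p.1 - p.2⟩)
          ?_ ?_ ?_ ?_ ?_
        · rintro ⟨r, j⟩ h
          simp only [Finset.mem_sigma, Finset.mem_range, Nat.lt_succ_iff, le_min_iff] at h ⊢
          omega
        · rintro ⟨k, r⟩ h
          simp only [Finset.mem_sigma, Finset.mem_range, Nat.lt_succ_iff, le_min_iff] at h ⊢
          omega
        · rintro ⟨r, j⟩ h
          simp only [Finset.mem_sigma, Finset.mem_range, Nat.lt_succ_iff, le_min_iff] at h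
          simp only [Sigma.mk.inj_iff, heq_eq_eq]
          simp only [true_and, and_true]; omega
        · rintro ⟨k, r⟩ h
          simp only [Finset.mem_sigma, Finset.mem_range, Nat.lt_succ_iff, le_min_iff] at h
          simp only [Sigma.mk.inj_iff, heq_eq_eq]
          simp only [true_and, and_true]; omega
        · rintro ⟨r, j⟩ h
          rfl
    _ = ∑ k ∈ Finset.range (n + 1), (n.choose k : R) * (a ^ k * b ^ (n - k)) := by
        refine Finset.sum_congr rfl fun k hk => ?_
        simp only [Finset.mem_range] at hk
        rw [← Finset.sum_mul, ← Nat.cast_sum, sum_mult n _ (by omega)]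
        congr 2
        rcases le_or_gt (2 * k) n with h | h
        · rw [min_eq_left (by omega)]
        · rw [min_eq_right (by omega), Nat.choose_symm (by omega)]
    _ = (a + b) ^ n := by
        rw [add_pow]
        refine Finset.sum_congr rfl fun k hk => ?_
        ring
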